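/- Let σ, γ > 0, a > 0, c_∞ ≥ 0, τ : [0,∞) → [0,∞), and let Q_γ be the sticky kernel on [0,∞) driven by τ. Then for any w ≥ 0, ∫ (e^{a w̃} − 1) Q_γ(w, dw̃) equals e^{2a²σ²γ}[ e^{a(τ(w)+γc_∞)} ( Φ((τ(w)+γc_∞)/(2σγ^{1/2}) + 2σγ^{1/2}a) − Φ(−(τ(w)+γc_∞)/(2σγ^{1/2}) + 2σγ^{1/2}a) ) + 2 sinh(a(τ(w)+γc_∞)) Φ(−(τ(w)+γc_∞)/(2σγ^{1/2}) + 2σγ^{1/2}a) ] − 1 + 2Φ(−(τ(w)+γc_∞)/(2σγ^{1/2})). -/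
import Mathlib

open MeasureTheory

/-- Standard Gaussian density. -/
noncomputable def stdG (g : ℝ) : ℝ :=
  (Real.sqrt (2 * Real.pi))⁻¹ * Real.exp (-g ^ 2 / 2)

/-- Standard Gaussian cumulative distribution function. -/
noncomputable def Phi (x : ℝ) : ℝ := ∫ u in Set.Iio x, stdG u

/-- Density of the one-dimensional centered Gaussian with variance `v`. -/
noncomputable def gpdf (v x : ℝ) : ℝ :=
  (Real.sqrt (2 * Real.pi * v))⁻¹ * Real.exp (-x ^ 2 / (2 * v))

/-- `p̄(t, g) = min(1, φ_v(t − √v g)/φ_v(√v g))` with `v = σ²γ`. -/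
noncomputable def pbar (σ γ t g : ℝ) : ℝ :=
  min 1 (gpdf (σ ^ 2 * γ) (t - σ * Real.sqrt γ * g) /
    gpdf (σ ^ 2 * γ) (σ * Real.sqrt γ * g))

lemma stdG_eq' : stdG = fun g : ℝ =>
    (Real.sqrt (2 * Real.pi))⁻¹ * Real.exp (-(1/2) * g ^ 2) := by
  funext g
  rw [stdG, show -g ^ 2 / 2 = -(1/2) * g ^ 2 by ring]

lemma integrable_stdG : Integrable stdG := by
  rw [stdG_eq']
  exact (integrable_exp_neg_mul_sq (by norm_num : (0:ℝ) < 1/2)).const_mul _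

lemma integral_stdG : ∫ g : ℝ, stdG g = 1 := by
  rw [stdG_eq']
  rw [MeasureTheory.integral_const_mul, integral_gaussian]
  rw [show Real.pi / (1/2) = 2 * Real.pi by ring]
  rw [inv_mul_cancel₀]
  positivity

lemma stdG_shift (b g : ℝ) :
    Real.exp (b * g) * stdG g = Real.exp (b ^ 2 / 2) * stdG (g - b) := by
  unfold stdG
  rw [mul_left_comm, mul_left_comm (Real.exp (b ^ 2 / 2)), ← Real.exp_add, ← Real.exp_add]
  congr 2
  ring

lemma Phi_def (m : ℝ) : ∫ g in Set.Iio m, stdG g = Phi m := rfl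

lemma setIntegral_comp_sub (f : ℝ → ℝ) (b m : ℝ) :
    ∫ g in Set.Iio m, f (g - b) = ∫ g in Set.Iio (m - b), f g := by
  rw [← integral_indicator measurableSet_Iio, ← integral_indicator measurableSet_Iio]
  have h : ∀ g : ℝ, (Set.Iio m).indicator (fun g => f (g - b)) g
      = (Set.Iio (m - b)).indicator f (g - b) := by
    intro g
    simp only [Set.indicator_apply, Set.mem_Iio, sub_lt_sub_iff_right]
  simp_rw [h]
  exact integral_sub_right_eq_self ((Set.Iio (m - b)).indicator f) b

lemma integral_exp_mul_stdG_Iio (b m : ℝ) :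
    ∫ g in Set.Iio m, Real.exp (b * g) * stdG g = Real.exp (b ^ 2 / 2) * Phi (m - b) := by
  simp_rw [stdG_shift b]
  rw [MeasureTheory.integral_const_mul, setIntegral_comp_sub stdG b m, Phi_def]

lemma integrable_exp_mul_stdG (b : ℝ) :
    Integrable (fun g : ℝ => Real.exp (b * g) * stdG g) := by
  have h : (fun g : ℝ => Real.exp (b * g) * stdG g)
      = fun g => Real.exp (b ^ 2 / 2) * stdG (g - b) := by
    funext g; exact stdG_shift b g
  rw [h]
  exact (integrable_stdG.comp_sub_right b).const_mul _

lemma Phi_neg (m : ℝ) : Phi (-m) = 1 - Phi m := by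
  have h1 : Phi m + ∫ g in Set.Ici m, stdG g = 1 := by
    rw [← integral_stdG, ← Phi_def,
      ← MeasureTheory.integral_add_compl measurableSet_Iio integrable_stdG (f := stdG)]
    congr 1
    rw [Set.compl_Iio]
  have h2 : ∫ g in Set.Ici m, stdG g = Phi (-m) := by
    have hev : ∀ x : ℝ, stdG (-x) = stdG x := by
      intro x; rw [stdG, stdG, neg_sq]
    calc ∫ g in Set.Ici m, stdG g
        = ∫ g in Set.Ioi m, stdG g := by rw [MeasureTheory.integral_Ici_eq_integral_Ioi]
      _ = ∫ g in Set.Ioi m, stdG (-g) := by simp_rw [hev]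
      _ = ∫ g in Set.Iic (-m), stdG g := integral_comp_neg_Ioi m stdG
      _ = Phi (-m) := by
          rw [← Phi_def, setIntegral_congr_set MeasureTheory.Iio_ae_eq_Iic]
  linarith

lemma pbar_eq {σ γ : ℝ} (hσ : 0 < σ) (hγ : 0 < γ) (t g : ℝ) :
    pbar σ γ t g =
      min 1 (Real.exp (t * (2 * (σ * Real.sqrt γ) * g - t) / (2 * (σ ^ 2 * γ)))) := by
  have hv : (0:ℝ) < σ ^ 2 * γ := by positivity
  have hC : ((Real.sqrt (2 * Real.pi * (σ ^ 2 * γ)))⁻¹ : ℝ) ≠ 0 := by positivity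
  unfold pbar gpdf
  rw [mul_div_mul_left _ _ hC, ← Real.exp_sub]
  congr 2
  have h2v : (2:ℝ) * (σ ^ 2 * γ) ≠ 0 := by positivity
  field_simp
  ring

lemma main_calc (σ γ a t : ℝ) (hσ : 0 < σ) (hγ : 0 < γ) (ha : 0 < a) (ht : 0 ≤ t) :
    ∫ g : ℝ, (Real.exp (a * (t - 2 * σ * Real.sqrt γ * g)) - 1) *
        (1 - min 1 (Real.exp (t * (2 * (σ * Real.sqrt γ) * g - t) / (2 * (σ ^ 2 * γ))))) * stdG g
    = Real.exp (2 * a ^ 2 * σ ^ 2 * γ) *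
        (Real.exp (a * t) *
          (Phi (t / (2 * σ * Real.sqrt γ) + 2 * σ * Real.sqrt γ * a) -
            Phi (-(t / (2 * σ * Real.sqrt γ)) + 2 * σ * Real.sqrt γ * a)) +
          2 * Real.sinh (a * t) *
            Phi (-(t / (2 * σ * Real.sqrt γ)) + 2 * σ * Real.sqrt γ * a))
      - 1 + 2 * Phi (-(t / (2 * σ * Real.sqrt γ))) := by
  have hsq : Real.sqrt γ > 0 := Real.sqrt_pos.mpr hγ
  have hassoc : (2:ℝ) * σ * Real.sqrt γ = 2 * (σ * Real.sqrt γ) := mul_assoc 2 σ _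
  have hvar : σ ^ 2 * γ = (σ * Real.sqrt γ) ^ 2 := by
    rw [mul_pow, Real.sq_sqrt hγ.le]
  rw [show 2 * a ^ 2 * σ ^ 2 * γ = 2 * a ^ 2 * (σ * Real.sqrt γ) ^ 2 by
    rw [mul_pow, Real.sq_sqrt hγ.le]; ring]
  simp only [hassoc, hvar]
  set s := σ * Real.sqrt γ with hs_def
  have hs : 0 < s := by positivity
  clear_value s
  clear hs_def hassoc hvar hsq
  -- now the goal is purely in terms of s
  rcases eq_or_lt_of_le ht with ht0 | ht0
  · -- t = 0
    subst ht0
    have := Phi_neg 0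
    rw [neg_zero] at this
    have hPhi0 : Phi 0 = 1/2 := by linarith
    simp [hPhi0]
  · -- t > 0
    set m := t / (2 * s) with hm_def
    have hF : ∀ g : ℝ, (Real.exp (a * (t - 2 * s * g)) - 1) *
        (1 - min 1 (Real.exp (t * (2 * s * g - t) / (2 * s ^ 2)))) * stdG g
        = (Set.Iio m).indicator (fun g =>
            Real.exp (a * t) * (Real.exp (-(2 * a * s) * g) * stdG g)
            - stdG g
            - Real.exp (a * t - t ^ 2 / (2 * s ^ 2)) *
                (Real.exp ((t / s - 2 * a * s) * g) * stdG g)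
            + Real.exp (-(t ^ 2 / (2 * s ^ 2))) * (Real.exp ((t / s) * g) * stdG g)) g := by
      intro g
      by_cases hg : g < m
      · rw [Set.indicator_of_mem (show g ∈ Set.Iio m from hg)]
        have hE : t * (2 * s * g - t) / (2 * s ^ 2) < 0 := by
          apply div_neg_of_neg_of_pos _ (by positivity)
          apply mul_neg_of_pos_of_neg ht0
          rw [hm_def, lt_div_iff₀ (by positivity : (0:ℝ) < 2 * s)] at hg
          nlinarith
        rw [min_eq_right (Real.exp_lt_one_iff.mpr hE).le]
        have e1 : a * (t - 2 * s * g) = a * t + -(2 * a * s) * g := by ring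
        have e2 : t * (2 * s * g - t) / (2 * s ^ 2)
            = -(t ^ 2 / (2 * s ^ 2)) + (t / s) * g := by
          field_simp; ring
        rw [e1, e2, Real.exp_add, Real.exp_add,
          show a * t - t ^ 2 / (2 * s ^ 2) = a * t + -(t ^ 2 / (2 * s ^ 2)) by ring,
          Real.exp_add,
          show (t / s - 2 * a * s) * g = -(2 * a * s) * g + (t / s) * g by ring,
          Real.exp_add]
        ring
      · rw [Set.indicator_of_notMem (show g ∉ Set.Iio m from hg)]
        have hE : 0 ≤ t * (2 * s * g - t) / (2 * s ^ 2) := by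
          apply div_nonneg _ (by positivity)
          apply mul_nonneg ht
          push_neg at hg
          rw [hm_def, div_le_iff₀ (by positivity : (0:ℝ) < 2 * s)] at hg
          nlinarith
        rw [min_eq_left (Real.one_le_exp hE)]
        simp
    simp_rw [hF]
    rw [integral_indicator measurableSet_Iio]
    have hA : IntegrableOn (fun g : ℝ =>
        Real.exp (a * t) * (Real.exp (-(2 * a * s) * g) * stdG g)) (Set.Iio m) :=
      (((integrable_exp_mul_stdG _).const_mul _).integrableOn)
    have hB : IntegrableOn stdG (Set.Iio m) := integrable_stdG.integrableOn
    have hC : IntegrableOn (fun g : ℝ => Real.exp (a * t - t ^ 2 / (2 * s ^ 2)) *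
        (Real.exp ((t / s - 2 * a * s) * g) * stdG g)) (Set.Iio m) :=
      (((integrable_exp_mul_stdG _).const_mul _).integrableOn)
    have hD : IntegrableOn (fun g : ℝ => Real.exp (-(t ^ 2 / (2 * s ^ 2))) *
        (Real.exp ((t / s) * g) * stdG g)) (Set.Iio m) :=
      (((integrable_exp_mul_stdG _).const_mul _).integrableOn)
    have hAB : IntegrableOn (fun g : ℝ =>
        Real.exp (a * t) * (Real.exp (-(2 * a * s) * g) * stdG g) - stdG g) (Set.Iio m) :=
      hA.sub hB
    have hABC : IntegrableOn (fun g : ℝ =>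
        Real.exp (a * t) * (Real.exp (-(2 * a * s) * g) * stdG g) - stdG g
          - Real.exp (a * t - t ^ 2 / (2 * s ^ 2)) *
              (Real.exp ((t / s - 2 * a * s) * g) * stdG g)) (Set.Iio m) :=
      hAB.sub hC
    rw [MeasureTheory.integral_add hABC hD,
      MeasureTheory.integral_sub hAB hC, MeasureTheory.integral_sub hA hB]
    rw [MeasureTheory.integral_const_mul, MeasureTheory.integral_const_mul,
      MeasureTheory.integral_const_mul]
    rw [integral_exp_mul_stdG_Iio, integral_exp_mul_stdG_Iio, integral_exp_mul_stdG_Iio,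
      Phi_def]
    -- normalize Phi arguments
    rw [show m - -(2 * a * s) = t / (2 * s) + 2 * s * a by rw [hm_def]; ring]
    rw [show m - (t / s - 2 * a * s) = -(t / (2 * s)) + 2 * s * a by
      rw [hm_def]; field_simp; ring]
    rw [show m - t / s = -(t / (2 * s)) by rw [hm_def]; field_simp; ring]
    -- normalize exponentials
    rw [show (-(2 * a * s)) ^ 2 / 2 = 2 * a ^ 2 * s ^ 2 by ring]
    rw [show Real.exp (a * t - t ^ 2 / (2 * s ^ 2)) * (Real.exp ((t / s - 2 * a * s) ^ 2 / 2) *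
          Phi (-(t / (2 * s)) + 2 * s * a))
        = Real.exp (2 * a ^ 2 * s ^ 2) * Real.exp (-(a * t)) *
          Phi (-(t / (2 * s)) + 2 * s * a) by
      rw [← mul_assoc, ← Real.exp_add, ← Real.exp_add]
      congr 2
      field_simp
      ring]
    rw [show Real.exp (-(t ^ 2 / (2 * s ^ 2))) * (Real.exp ((t / s) ^ 2 / 2) *
          Phi (-(t / (2 * s)))) = Phi (-(t / (2 * s))) by
      rw [← mul_assoc, ← Real.exp_add,
        show -(t ^ 2 / (2 * s ^ 2)) + (t / s) ^ 2 / 2 = 0 by field_simp; ring,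
        Real.exp_zero, one_mul]]
    have hPm : Phi m = 1 - Phi (-(t / (2 * s))) := by
      have := Phi_neg (t / (2 * s))
      rw [hm_def]; linarith
    rw [hPm, Real.sinh_eq]
    ring

/-- The exact exponential-moment formula for one sticky step: the kernel `Q_γ` jumps
to `0` with probability `p̄(t, g)` (so `e^{a·0} − 1` there) and otherwise moves to
`t − 2σ√γ g`, where `t = τ(w) + γ c_∞` and `g` is standard Gaussian. -/
theorem sticky_exponential_moment (σ γ a c : ℝ) (τ : ℝ → ℝ)
    (hσ : 0 < σ) (hγ : 0 < γ) (ha : 0 < a) (hc : 0 ≤ c)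
    (hτ0 : ∀ w, 0 ≤ w → 0 ≤ τ w) (w : ℝ) (hw : 0 ≤ w) :
    (∫ g : ℝ, pbar σ γ (τ w + γ * c) g * stdG g) * (Real.exp (a * 0) - 1) +
      (∫ g : ℝ,
        (Real.exp (a * (τ w + γ * c - 2 * σ * Real.sqrt γ * g)) - 1) *
          (1 - pbar σ γ (τ w + γ * c) g) * stdG g)
    = Real.exp (2 * a ^ 2 * σ ^ 2 * γ) *
        (Real.exp (a * (τ w + γ * c)) *
          (Phi ((τ w + γ * c) / (2 * σ * Real.sqrt γ) + 2 * σ * Real.sqrt γ * a) -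
            Phi (-((τ w + γ * c) / (2 * σ * Real.sqrt γ)) + 2 * σ * Real.sqrt γ * a)) +
          2 * Real.sinh (a * (τ w + γ * c)) *
            Phi (-((τ w + γ * c) / (2 * σ * Real.sqrt γ)) + 2 * σ * Real.sqrt γ * a))
      - 1 + 2 * Phi (-((τ w + γ * c) / (2 * σ * Real.sqrt γ))) := by
  have ht : 0 ≤ τ w + γ * c := add_nonneg (hτ0 w hw) (mul_nonneg hγ.le hc)
  rw [mul_zero, Real.exp_zero, sub_self, mul_zero, zero_add]
  simp_rw [pbar_eq hσ hγ]
  exact main_calc σ γ a (τ w + γ * c) hσ hγ ha ht
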